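/- Let μ ≠ 0 with |μ| ≤ 1 and Φ(z) = μz. For a positive integer m, the composition operator C_Φ on H_E(ξ) is an m-isometry (i.e., Σ_{k=0}^m (−1)^{m−k} C(m,k) (C_Φ*)^k C_Φ^k = 0) if and only if C_Φ is an isometry, i.e., if and only if |μ| = 1. -/

import Mathlib

noncomputable section

open Filter

/-- `n`-th Taylor coefficient of `f` at `0`. -/
def heCoeff (f : ℂ → ℂ) (n : ℕ) : ℂ := iteratedDeriv n f 0 / (n.factorial : ℂ)

/-- Membership in the weighted Hardy space of entire functions `H_E(ξ)`. -/
def MemHE (ξ : ℕ → ℝ) (f : ℂ → ℂ) : Prop :=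
  Differentiable ℂ f ∧ Summable (fun n => ‖heCoeff f n‖ ^ 2 * (ξ n) ^ 2)

/-- Squared norm in `H_E(ξ)`. -/
def heNormSq (ξ : ℕ → ℝ) (f : ℂ → ℂ) : ℝ := ∑' n, ‖heCoeff f n‖ ^ 2 * (ξ n) ^ 2

/-- Inner product in `H_E(ξ)`. -/
def heInner (ξ : ℕ → ℝ) (f g : ℂ → ℂ) : ℂ :=
  ∑' n, heCoeff f n * (starRingEnd ℂ) (heCoeff g n) * ((ξ n : ℂ)) ^ 2

/-- `ξ` is an admissible weight sequence: positive with `ξ n ^ (1/n) → ∞`. -/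
def HEWeight (ξ : ℕ → ℝ) : Prop :=
  (∀ n, 0 < ξ n) ∧ Tendsto (fun n : ℕ => (ξ n) ^ ((1 : ℝ) / n)) atTop atTop

/-- An operator on functions is an isometry of `H_E(ξ)`. -/
def IsIsometryHE (ξ : ℕ → ℝ) (T : (ℂ → ℂ) → (ℂ → ℂ)) : Prop :=
  (∀ f, MemHE ξ f → MemHE ξ (T f)) ∧ ∀ f, MemHE ξ f → heNormSq ξ (T f) = heNormSq ξ f

/-- Unitary: an isometry of `H_E(ξ)` mapping `H_E(ξ)` onto itself. -/
def IsUnitaryHE (ξ : ℕ → ℝ) (T : (ℂ → ℂ) → (ℂ → ℂ)) : Prop :=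
  IsIsometryHE ξ T ∧ ∀ g, MemHE ξ g → ∃ f, MemHE ξ f ∧ T f = g

/-- Composition operator `C_Φ f = f ∘ Φ`. -/
def compOp (Φ : ℂ → ℂ) : (ℂ → ℂ) → (ℂ → ℂ) := fun f => f ∘ Φ

/-- Weighted composition operator `C_{Υ,Φ} f = Υ · (f ∘ Φ)`. -/
def wCompOp (Υ Φ : ℂ → ℂ) : (ℂ → ℂ) → (ℂ → ℂ) := fun f z => Υ z * f (Φ z)

/-- Reproducing kernel `K_p(z) = ∑ conj(p)^n z^n / ξ_n²`. -/
def heKernel (ξ : ℕ → ℝ) (p : ℂ) : ℂ → ℂ :=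
  fun z => ∑' n, (starRingEnd ℂ p) ^ n * z ^ n / ((ξ n : ℂ)) ^ 2

/-- Boundedness of an operator on `H_E(ξ)`. -/
def IsBoundedHE (ξ : ℕ → ℝ) (T : (ℂ → ℂ) → (ℂ → ℂ)) : Prop :=
  ∃ M > (0 : ℝ), ∀ f, MemHE ξ f → MemHE ξ (T f) ∧
    Real.sqrt (heNormSq ξ (T f)) ≤ M * Real.sqrt (heNormSq ξ f)

/-- Generalized weighted composition operator `D^p_{Φ,Υ} f = Υ · (f^{(p)} ∘ Φ)`. -/
def genWComp (p : ℕ) (Φ Υ : ℂ → ℂ) : (ℂ → ℂ) → (ℂ → ℂ) :=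
  fun f z => Υ z * iteratedDeriv p f (Φ z)

/-- `T` is an `m`-isometry on `H_E(ξ)`:
`∑ₖ (-1)^{m-k} C(m,k) ⟨T^k f, T^k g⟩ = 0` for all `f, g ∈ H_E(ξ)`
(equivalently `∑ₖ (-1)^{m-k} C(m,k) T*^k T^k = 0`). -/
def IsMIsometryHE (ξ : ℕ → ℝ) (T : (ℂ → ℂ) → (ℂ → ℂ)) (m : ℕ) : Prop :=
  ∀ f g, MemHE ξ f → MemHE ξ g →
    ∑ k ∈ Finset.range (m + 1),
      ((-1 : ℂ)) ^ (m - k) * (m.choose k : ℂ) * heInner ξ (T^[k] f) (T^[k] g) = 0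


private lemma iterDeriv_const' (n : ℕ) (c : ℂ) :
    iteratedDeriv n (fun _ : ℂ => c) = fun _ => if n = 0 then c else 0 := by
  induction n generalizing c with
  | zero => simp
  | succ n ih =>
    rw [iteratedDeriv_succ']
    have : deriv (fun _ : ℂ => c) = fun _ : ℂ => (0 : ℂ) := by
      funext z; exact deriv_const z c
    rw [this, ih]
    simp

private lemma heCoeff_linear (c : ℂ) (n : ℕ) :
    heCoeff (fun z => c * z) n = if n = 1 then c else 0 := by
  have hderiv : deriv (fun z : ℂ => c * z) = fun _ : ℂ => c := by
    funext z
    rw [deriv_const_mul_field]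
    simp
  match n with
  | 0 => simp [heCoeff]
  | 1 =>
    simp only [heCoeff, iteratedDeriv_one, hderiv]
    simp
  | (n + 2) =>
    rw [heCoeff, iteratedDeriv_succ', hderiv, iterDeriv_const']
    simp

private lemma heCoeff_comp_mul {f : ℂ → ℂ} (hf : Differentiable ℂ f) (c : ℂ) (n : ℕ) :
    heCoeff (fun z => f (c * z)) n = c ^ n * heCoeff f n := by
  have h := iteratedDeriv_comp_const_mul (f := f) (n := n) (hf.contDiff) c
  have h0 := congrFun h 0
  simp only [mul_zero] at h0
  rw [heCoeff, h0, heCoeff]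
  ring

private lemma compOp_iterate (μ : ℂ) (f : ℂ → ℂ) (k : ℕ) :
    (compOp (fun z => μ * z))^[k] f = fun z => f (μ ^ k * z) := by
  induction k with
  | zero => funext z; simp
  | succ k ih =>
    rw [Function.iterate_succ_apply', ih]
    funext z
    simp only [compOp, Function.comp_apply]
    ring_nf

private lemma memHE_linear (ξ : ℕ → ℝ) (c : ℂ) : MemHE ξ (fun z => c * z) := by
  constructor
  · exact (differentiable_id.const_mul c)
  · apply summable_of_ne_finset_zero (s := {1})
    intro n hn
    simp only [Finset.mem_singleton] at hn
    simp [heCoeff_linear, hn]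

private lemma heInner_linear (ξ : ℕ → ℝ) (c d : ℂ) :
    heInner ξ (fun z => c * z) (fun z => d * z)
      = c * (starRingEnd ℂ) d * ((ξ 1 : ℂ)) ^ 2 := by
  rw [heInner]
  rw [tsum_eq_single 1]
  · simp [heCoeff_linear]
  · intro n hn
    simp [heCoeff_linear, hn]

private lemma heNormSq_linear (ξ : ℕ → ℝ) (c : ℂ) :
    heNormSq ξ (fun z => c * z) = ‖c‖ ^ 2 * (ξ 1) ^ 2 := by
  rw [heNormSq]
  rw [tsum_eq_single 1]
  · simp [heCoeff_linear]
  · intro n hn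
    simp [heCoeff_linear, hn]

private lemma mu_pow_conj (μ : ℂ) (j : ℕ) :
    μ ^ j * (starRingEnd ℂ) (μ ^ j) = ((‖μ‖ ^ 2 : ℝ) : ℂ) ^ j := by
  rw [Complex.mul_conj, Complex.normSq_eq_norm_sq, norm_pow]
  push_cast
  ring

/-- For `μ ≠ 0`, `|μ| ≤ 1`, `Φ(z) = μz` and `m ≥ 1`: `C_Φ` is an `m`-isometry
on `H_E(ξ)` iff it is an isometry, iff `|μ| = 1`. -/
theorem stmt15 (ξ : ℕ → ℝ) (hξ : HEWeight ξ) (μ : ℂ) (hμ0 : μ ≠ 0)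
    (hμ : ‖μ‖ ≤ 1) (Φ : ℂ → ℂ) (hΦ : Φ = fun z => μ * z)
    (m : ℕ) (hm : 0 < m) :
    (IsMIsometryHE ξ (compOp Φ) m ↔ IsIsometryHE ξ (compOp Φ)) ∧
    (IsMIsometryHE ξ (compOp Φ) m ↔ ‖μ‖ = 1) := by
  subst hΦ
  -- `m`-isometry implies `‖μ‖ = 1`
  have key1 : IsMIsometryHE ξ (compOp (fun z => μ * z)) m → ‖μ‖ = 1 := by
    intro h
    have hid : MemHE ξ (fun z : ℂ => (1 : ℂ) * z) := memHE_linear ξ 1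
    have h2 := h _ _ hid hid
    have hiter : ∀ k : ℕ, (compOp (fun z => μ * z))^[k] (fun z : ℂ => (1 : ℂ) * z)
        = fun z => μ ^ k * z := by
      intro k
      rw [compOp_iterate]
      funext z; ring
    have h3 : ∀ k : ℕ, heInner ξ ((compOp (fun z => μ * z))^[k] (fun z : ℂ => (1:ℂ) * z))
        ((compOp (fun z => μ * z))^[k] (fun z : ℂ => (1:ℂ) * z))
        = ((‖μ‖ ^ 2 : ℝ) : ℂ) ^ k * ((ξ 1 : ℂ)) ^ 2 := by
      intro k
      rw [hiter, heInner_linear, mu_pow_conj]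
    rw [Finset.sum_congr rfl (fun k _ => by rw [h3 k])] at h2
    have hx : ((((‖μ‖ ^ 2 : ℝ) : ℂ) - 1) ^ m) * ((ξ 1 : ℂ)) ^ 2 = 0 := by
      rw [← h2, sub_eq_add_neg, add_pow, Finset.sum_mul]
      apply Finset.sum_congr rfl
      intro k _
      ring
    have hξ1 : ((ξ 1 : ℂ)) ^ 2 ≠ 0 := by
      have := (hξ.1 1).ne'
      simp [pow_eq_zero_iff, this]
    have h4 : (((‖μ‖ ^ 2 : ℝ) : ℂ) - 1) ^ m = 0 := by
      rcases mul_eq_zero.mp hx with h | h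
      · exact h
      · exact absurd h hξ1
    have h5 : ((‖μ‖ ^ 2 : ℝ) : ℂ) = 1 := by
      have := pow_eq_zero_iff hm.ne' |>.mp h4
      linear_combination this
    have h6 : ‖μ‖ ^ 2 = 1 := by exact_mod_cast h5
    nlinarith [norm_nonneg μ]
  -- `‖μ‖ = 1` implies membership preservation and norm/inner preservation
  have hcoeff : ∀ (f : ℂ → ℂ), Differentiable ℂ f → ∀ (k n : ℕ),
      heCoeff ((compOp (fun z => μ * z))^[k] f) n = (μ ^ k) ^ n * heCoeff f n := by
    intro f hf k n
    rw [compOp_iterate]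
    exact heCoeff_comp_mul hf (μ ^ k) n
  have key2 : ‖μ‖ = 1 → IsMIsometryHE ξ (compOp (fun z => μ * z)) m := by
    intro hnorm f g hf hg
    have hinner : ∀ k : ℕ,
        heInner ξ ((compOp (fun z => μ * z))^[k] f) ((compOp (fun z => μ * z))^[k] g)
          = heInner ξ f g := by
      intro k
      rw [heInner, heInner]
      apply tsum_congr
      intro n
      rw [hcoeff f hf.1 k n, hcoeff g hg.1 k n]
      have hone : (μ ^ k) ^ n * (starRingEnd ℂ) ((μ ^ k) ^ n) = 1 := by
        rw [← pow_mul, mu_pow_conj μ (k * n), hnorm]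
        norm_num
      calc (μ ^ k) ^ n * heCoeff f n * (starRingEnd ℂ) ((μ ^ k) ^ n * heCoeff g n)
            * ((ξ n : ℂ)) ^ 2
          = ((μ ^ k) ^ n * (starRingEnd ℂ) ((μ ^ k) ^ n))
            * (heCoeff f n * (starRingEnd ℂ) (heCoeff g n) * ((ξ n : ℂ)) ^ 2) := by
            rw [map_mul]; ring
        _ = heCoeff f n * (starRingEnd ℂ) (heCoeff g n) * ((ξ n : ℂ)) ^ 2 := by
            rw [hone, one_mul]
    rw [Finset.sum_congr rfl (fun k _ => by rw [hinner k])]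
    have hz : ∑ k ∈ Finset.range (m + 1),
        ((-1 : ℂ)) ^ (m - k) * (m.choose k : ℂ) = 0 := by
      have h := add_pow (1 : ℂ) (-1) m
      have h0 : ((1 : ℂ) + (-1)) ^ m = 0 := by
        have he : (1 : ℂ) + (-1) = 0 := by ring
        rw [he]
        exact zero_pow hm.ne'
      rw [h0] at h
      rw [← h.symm]
      · apply Finset.sum_congr rfl
        intro k _
        ring
    calc ∑ k ∈ Finset.range (m + 1),
          ((-1 : ℂ)) ^ (m - k) * (m.choose k : ℂ) * heInner ξ f g
        = (∑ k ∈ Finset.range (m + 1),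
            ((-1 : ℂ)) ^ (m - k) * (m.choose k : ℂ)) * heInner ξ f g := by
          rw [Finset.sum_mul]
      _ = 0 := by rw [hz, zero_mul]
  -- `‖μ‖ = 1` iff isometry
  have key3 : ‖μ‖ = 1 → IsIsometryHE ξ (compOp (fun z => μ * z)) := by
    intro hnorm
    have hCoeffNorm : ∀ (f : ℂ → ℂ), Differentiable ℂ f → ∀ n,
        ‖heCoeff (compOp (fun z => μ * z) f) n‖ = ‖heCoeff f n‖ := by
      intro f hf n
      have : compOp (fun z => μ * z) f = fun z => f (μ * z) := rfl
      rw [this, heCoeff_comp_mul hf μ n, norm_mul, norm_pow, hnorm]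
      simp
    constructor
    · intro f hf
      refine ⟨hf.1.comp (differentiable_id.const_mul μ), ?_⟩
      have : (fun n => ‖heCoeff (compOp (fun z => μ * z) f) n‖ ^ 2 * (ξ n) ^ 2)
          = fun n => ‖heCoeff f n‖ ^ 2 * (ξ n) ^ 2 := by
        funext n; rw [hCoeffNorm f hf.1 n]
      rw [this]
      exact hf.2
    · intro f hf
      rw [heNormSq, heNormSq]
      apply tsum_congr
      intro n
      rw [hCoeffNorm f hf.1 n]
  have key4 : IsIsometryHE ξ (compOp (fun z => μ * z)) → ‖μ‖ = 1 := by
    intro h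
    have hid : MemHE ξ (fun z : ℂ => (1 : ℂ) * z) := memHE_linear ξ 1
    have h2 := h.2 _ hid
    have himg : compOp (fun z => μ * z) (fun z : ℂ => (1 : ℂ) * z)
        = fun z => μ * z := by funext z; simp [compOp]
    rw [himg, heNormSq_linear, heNormSq_linear] at h2
    have hξ1 : (0 : ℝ) < (ξ 1) ^ 2 := pow_pos (hξ.1 1) 2
    have h6 : ‖μ‖ ^ 2 = 1 := by
      have : ‖μ‖ ^ 2 * (ξ 1) ^ 2 = ‖(1 : ℂ)‖ ^ 2 * (ξ 1) ^ 2 := h2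
      simp only [norm_one, one_pow] at this
      rw [one_mul] at this
      have := mul_right_cancel₀ hξ1.ne' (this.trans (one_mul _).symm)
      exact this
    nlinarith [norm_nonneg μ]
  exact ⟨⟨fun h => key3 (key1 h), fun h => key2 (key4 h)⟩,
    ⟨key1, key2⟩⟩
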